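/- Tensor CUR reconstruction (one direction of Theorem 3.3): let A ∈ ℝ^{d₁×⋯×dₙ} admit an exact Tucker decomposition with core of size (r₁,…,rₙ); let Iᵢ ⊆ [dᵢ], Jᵢ ⊆ [Π_{j≠i}d_j], R = A(I₁,…,Iₙ), Cᵢ = A_(i)(:,Jᵢ), Uᵢ = Cᵢ(Iᵢ,:). If rank(Uᵢ) = rᵢ for every i, then A = R ×₁ (C₁U₁⁺) ×₂ ⋯ ×ₙ (CₙUₙ⁺). -/

import Mathlib

open Matrix

universe u

/-- `B` is the Moore–Penrose pseudoinverse of `A`. -/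
def IsMoorePenroseInv {m n : Type*} [Fintype m] [Fintype n]
    (A : Matrix m n ℝ) (B : Matrix n m ℝ) : Prop :=
  A * B * A = A ∧ B * A * B = B ∧ (A * B)ᵀ = A * B ∧ (B * A)ᵀ = B * A

/-- Mode-`k` unfolding of an `n`-mode tensor. -/
def unfold {n : ℕ} {κ : Fin n → Type u} (k : Fin n)
    (X : (∀ i, κ i) → ℝ) :
    Matrix (κ k) (∀ i : {j : Fin n // j ≠ k}, κ i.1) ℝ :=
  fun a t => X fun i =>
    if h : i = k then cast (congrArg κ h).symm a else t ⟨i, h⟩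

section MatrixAux
set_option linter.unusedSectionVars false

variable {m ι κ : Type*} [Fintype m] [Fintype ι] [Fintype κ]

private def selL [DecidableEq m] (f : κ → m) : Matrix κ m ℝ :=
  fun a b => if f a = b then 1 else 0

private lemma selL_mul [DecidableEq m] (f : κ → m) (M : Matrix m ι ℝ) :
    selL f * M = M.submatrix f id := by
  ext a t
  simp [selL, Matrix.mul_apply]

private def selR [DecidableEq ι] (g : κ → ι) : Matrix ι κ ℝ :=
  fun a b => if a = g b then 1 else 0

private lemma mul_selR [DecidableEq ι] (M : Matrix m ι ℝ) (g : κ → ι) :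
    M * selR g = M.submatrix id g := by
  ext a t
  simp [selR, Matrix.mul_apply]

private lemma exists_left_factor [DecidableEq ι] (M : Matrix m ι ℝ) (g : κ → ι)
    (h : M.rank ≤ (M.submatrix id g).rank) :
    ∃ X : Matrix κ ι ℝ, M = M.submatrix id g * X := by
  classical
  set C := M.submatrix id g with hCdef
  have hCM : C = M * selR g := (mul_selR M g).symm
  have hle : LinearMap.range C.mulVecLin ≤ LinearMap.range M.mulVecLin := by
    rw [hCM, Matrix.mulVecLin_mul]
    exact LinearMap.range_comp_le_range _ _
  rw [Matrix.rank, Matrix.rank] at h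
  have heq : LinearMap.range C.mulVecLin = LinearMap.range M.mulVecLin :=
    Submodule.eq_of_le_of_finrank_le hle h
  have hcol : ∀ t : ι, ∃ v : κ → ℝ, C.mulVec v = M.mulVec (Pi.single t 1) := by
    intro t
    have : M.mulVec (Pi.single t 1) ∈ LinearMap.range C.mulVecLin := by
      rw [heq]
      exact ⟨Pi.single t 1, rfl⟩
    obtain ⟨v, hv⟩ := this
    exact ⟨v, hv⟩
  choose v hv using hcol
  refine ⟨Matrix.of fun k t => v t k, ?_⟩
  ext a t
  have h1 := congrFun (hv t) a
  simp only [Matrix.mulVec, dotProduct] at h1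
  have h0 : ∑ u, M a u * (Pi.single t (1:ℝ) : ι → ℝ) u = M a t := by
    simp [Pi.single_apply, mul_ite]
  calc M a t = ∑ u, M a u * (Pi.single t (1:ℝ) : ι → ℝ) u := h0.symm
    _ = ∑ k, C a k * v t k := h1.symm
    _ = (C * Matrix.of fun k t => v t k) a t := by
        simp [Matrix.mul_apply]

private lemma CUR_mat {mI mJ : Type*} [Fintype mI] [Fintype mJ]
    [DecidableEq m] [DecidableEq ι]
    (M : Matrix m ι ℝ) (fI : mI → m) (fJ : mJ → ι) (r : ℕ)
    (hM : M.rank = r)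
    (Up : Matrix mJ mI ℝ)
    (hUp : M.submatrix fI fJ * Up * M.submatrix fI fJ = M.submatrix fI fJ)
    (hr : (M.submatrix fI fJ).rank = r) :
    M.submatrix id fJ * Up * M.submatrix fI id = M := by
  classical
  set C := M.submatrix id fJ with hCdef
  set Mi := M.submatrix fI id with hMidef
  set U := M.submatrix fI fJ with hUdef
  have hUC : U = selL fI * C := by
    rw [selL_mul, hCdef, Matrix.submatrix_submatrix]
    rfl
  have hUMi : U = Mi * selR fJ := by
    rw [mul_selR, hMidef, Matrix.submatrix_submatrix]
    rfl
  have hMiM : Mi = selL fI * M := (selL_mul fI M).symm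
  have hrC : M.rank ≤ C.rank := by
    rw [hM, ← hr, hUC]
    exact Matrix.rank_mul_le_right _ _
  have hrMi : Mᵀ.rank ≤ (Mᵀ.submatrix id fI).rank := by
    rw [Matrix.rank_transpose, hM, ← hr, hUMi]
    have : Mᵀ.submatrix id fI = Miᵀ := by
      rw [hMidef, Matrix.transpose_submatrix]
    rw [this, Matrix.rank_transpose]
    exact Matrix.rank_mul_le_left _ _
  obtain ⟨X, hX⟩ := exists_left_factor M fJ hrC
  obtain ⟨Y', hY'⟩ := exists_left_factor Mᵀ fI hrMi
  have hY : M = Y'ᵀ * Mi := by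
    have h2 := congrArg Matrix.transpose hY'
    rw [Matrix.transpose_mul, Matrix.transpose_submatrix, Matrix.transpose_transpose] at h2
    rw [hMidef]
    exact h2
  have hCYU : C = Y'ᵀ * U := by
    rw [hCdef]
    conv_lhs => rw [hY]
    rw [← mul_selR, Matrix.mul_assoc, ← hUMi]
  have hMiUX : Mi = U * X := by
    rw [hMidef]
    conv_lhs => rw [hX]
    rw [← selL_mul, ← hCdef, ← Matrix.mul_assoc, ← hUC]
  calc C * Up * Mi = Y'ᵀ * (U * Up * U) * X := by
        rw [hCYU, hMiUX]
        simp only [Matrix.mul_assoc]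
    _ = Y'ᵀ * U * X := by rw [hUp, Matrix.mul_assoc]
    _ = C * X := by rw [hCYU]
    _ = M := hX.symm

end MatrixAux

section TensorAux

variable {n : ℕ} {κ : Fin n → Type u}

private def upd (k : Fin n) (y : ∀ i, κ i) (b : κ k) : ∀ i, κ i :=
  fun i => if h : i = k then cast (congrArg κ h).symm b else y i

private lemma upd_self (k : Fin n) (y : ∀ i, κ i) : upd k y (y k) = y := by
  funext i
  unfold upd
  split_ifs with h
  · subst h; rfl
  · rfl

private lemma unfold_upd (k : Fin n) (X : (∀ i, κ i) → ℝ) (y : ∀ i, κ i) (b : κ k) :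
    unfold k X b (fun i => y i.1) = X (upd k y b) := rfl

private lemma unfold_self (k : Fin n) (X : (∀ i, κ i) → ℝ) (y : ∀ i, κ i) :
    unfold k X (y k) (fun i => y i.1) = X y := by
  rw [unfold_upd, upd_self]

end TensorAux

theorem tensor_CUR {n : ℕ} (d r : Fin n → ℕ)
    (A : (∀ i, Fin (d i)) → ℝ)
    (hTucker : ∀ i, (unfold i A).rank = r i)
    (I : ∀ i, Finset (Fin (d i)))
    (J : ∀ i, Finset (∀ j : {j : Fin n // j ≠ i}, Fin (d j.1)))
    (R : (∀ i, {x // x ∈ I i}) → ℝ)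
    (hR : ∀ idx, R idx = A fun i => (idx i).1)
    (C : ∀ i, Matrix (Fin (d i)) {x // x ∈ J i} ℝ)
    (hC : ∀ i a j, C i a j = unfold i A a j.1)
    (U : ∀ i, Matrix {x // x ∈ I i} {x // x ∈ J i} ℝ)
    (hU : ∀ i a j, U i a j = C i a.1 j)
    (Up : ∀ i, Matrix {x // x ∈ J i} {x // x ∈ I i} ℝ)
    (hUp : ∀ i, IsMoorePenroseInv (U i) (Up i))
    (hrankU : ∀ i, (U i).rank = r i) :
    ∀ idx, A idx =
      ∑ s : ∀ i, {x // x ∈ I i}, R s * ∏ i, (C i * Up i) (idx i) (s i) := by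
  classical
  intro idx₀
  -- key single-mode identity
  have key : ∀ (j : Fin n) (y : ∀ i, Fin (d i)),
      A y = ∑ b : {x // x ∈ I j}, (C j * Up j) (y j) b * A (upd j y b.1) := by
    intro j y
    have hCj : C j = (unfold j A).submatrix id (Subtype.val : {x // x ∈ J j} → _) := by
      ext a s
      rw [hC]
      rfl
    have hUj : U j = (unfold j A).submatrix (Subtype.val : {x // x ∈ I j} → _) Subtype.val := by
      ext a s
      rw [hU, hC]
      rfl
    have hmain := CUR_mat (unfold j A) (Subtype.val : {x // x ∈ I j} → _)
      (Subtype.val : {x // x ∈ J j} → _) (r j) (hTucker j) (Up j)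
      (by rw [← hUj]; exact (hUp j).1) (by rw [← hUj]; exact hrankU j)
    rw [← hCj] at hmain
    have h7 := congrFun (congrFun hmain (y j)) (fun i : {j' : Fin n // j' ≠ j} => y i.1)
    rw [← unfold_self j A y, ← h7, Matrix.mul_apply]
    exact Finset.sum_congr rfl fun b _ => rfl
  by_cases hE : ∃ j, I j = ∅
  · -- degenerate case : some Iⱼ empty forces A = 0
    obtain ⟨j, hj⟩ := hE
    have hcard : Fintype.card {x // x ∈ I j} = 0 := by simp [hj]
    have hr0 : r j = 0 := by
      have h1 := (U j).rank_le_card_height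
      rw [hrankU j, hcard] at h1
      exact Nat.le_zero.mp h1
    have hM0 : ∀ a t, unfold j A a t = 0 := by
      have h2 : (unfold j A).rank = 0 := by rw [hTucker j, hr0]
      rw [Matrix.rank] at h2
      have h3 : LinearMap.range (unfold j A).mulVecLin = ⊥ :=
        Submodule.finrank_eq_zero.mp h2
      have h4 : (unfold j A).mulVecLin = 0 := LinearMap.range_eq_bot.mp h3
      intro a t
      have h5 : (unfold j A).mulVec (Pi.single t 1) = 0 := by
        rw [← Matrix.mulVecLin_apply, h4]
        rfl
      have h6 := congrFun h5 a
      simp only [Matrix.mulVec, dotProduct, Pi.zero_apply] at h6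
      have h0 : ∑ u, unfold j A a u * (Pi.single t (1:ℝ) : _ → ℝ) u = unfold j A a t := by
        simp [Pi.single_apply, mul_ite]
      rw [h0] at h6
      exact h6
    have hA0 : A idx₀ = 0 := by
      rw [← unfold_self j A idx₀]
      exact hM0 _ _
    rw [hA0]
    exact (Finset.sum_eq_zero fun s _ =>
      absurd (s j).2 (Finset.eq_empty_iff_forall_notMem.mp hj _)).symm
  · push_neg at hE
    have claim : ∀ S : Finset (Fin n), ∀ idx : (∀ i, Fin (d i)),
        (∏ i ∈ Sᶜ, ((I i).card : ℝ)) * A idx =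
        ∑ s : ∀ i, {x // x ∈ I i},
          (∏ i ∈ S, (C i * Up i) (idx i) (s i)) * A (fun i => if i ∈ S then (s i).1 else idx i) := by
      intro S
      induction S using Finset.induction_on with
      | empty =>
        intro idx
        have hcard : (Finset.univ : Finset (∀ i, {x // x ∈ I i})).card = ∏ i, (I i).card := by
          rw [Finset.card_univ, Fintype.card_pi]
          simp [Fintype.card_coe]
        simp only [Finset.prod_empty, one_mul, Finset.notMem_empty, if_false,
          Finset.compl_empty]
        rw [Finset.sum_const, hcard, nsmul_eq_mul, Nat.cast_prod]
      | @insert j S hjS ih =>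
        intro idx
        obtain ⟨x₀, hx₀⟩ := hE j
        set b₀ : {x // x ∈ I j} := ⟨x₀, hx₀⟩ with hb₀
        set e := Equiv.piSplitAt j (fun i => {x // x ∈ I i}) with he
        have hsymm_ne : ∀ (b : {x // x ∈ I j}) t (i : Fin n) (h : i ≠ j),
            e.symm (b, t) i = t ⟨i, h⟩ := by
          intro b t i h
          simp [he, Equiv.piSplitAt, h]
        have hsymm_j : ∀ b t, e.symm (b, t) j = b := by
          intro b t
          simp [he, Equiv.piSplitAt]
        set z : (∀ i : {i : Fin n // i ≠ j}, {x // x ∈ I i.1}) → (∀ i, Fin (d i)) :=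
          fun t i => if h : i ∈ S then (t ⟨i, fun hij => hjS (hij ▸ h)⟩).1 else idx i with hz
        have hz1 : ∀ b t, (fun i => if i ∈ S then ((e.symm (b, t)) i).1 else idx i) = z t := by
          intro b t
          funext i
          by_cases h : i ∈ S
          · have hij : i ≠ j := fun hij => hjS (hij ▸ h)
            simp [hz, h, hsymm_ne b t i hij]
          · simp [hz, h]
        have hz2 : ∀ b t,
            (fun i => if i ∈ insert j S then ((e.symm (b, t)) i).1 else idx i)
              = upd j (z t) b.1 := by
          intro b t
          funext i
          by_cases hij : i = j
          · subst hij
            have h1 : upd i (z t) b.1 i = b.1 := by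
              unfold upd
              rw [dif_pos rfl]
              rfl
            rw [h1]
            simp [hsymm_j]
          · have h1 : upd j (z t) b.1 i = z t i := by
              unfold upd
              rw [dif_neg hij]
            rw [h1]
            by_cases h : i ∈ S
            · simp [Finset.mem_insert, h, hz, hsymm_ne b t i hij]
            · simp [Finset.mem_insert, h, hij, hz]
        have hzj : ∀ t, z t j = idx j := by
          intro t
          simp [hz, hjS]
        have hprodc : ∀ (b : {x // x ∈ I j}) t,
            ∏ i ∈ S, (C i * Up i) (idx i) ((e.symm (b, t)) i)
              = ∏ i ∈ S, (C i * Up i) (idx i) ((e.symm (b₀, t)) i) := by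
          intro b t
          refine Finset.prod_congr rfl fun i hi => ?_
          have hij : i ≠ j := fun h => hjS (h ▸ hi)
          rw [hsymm_ne b t i hij, hsymm_ne b₀ t i hij]
        have hsum1 : ∀ (F : (∀ i, {x // x ∈ I i}) → ℝ),
            ∑ s, F s = ∑ b : {x // x ∈ I j}, ∑ t, F (e.symm (b, t)) := by
          intro F
          rw [← Equiv.sum_comp e.symm F, Fintype.sum_prod_type]
        have hkey2 : ∀ t, ∑ b : {x // x ∈ I j}, (C j * Up j) (idx j) b * A (upd j (z t) b.1)
            = A (z t) := by
          intro t
          have h1 := key j (z t)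
          rw [hzj t] at h1
          exact h1.symm
        -- right-hand side for `insert j S`
        have hRins : ∑ s : ∀ i, {x // x ∈ I i},
            (∏ i ∈ insert j S, (C i * Up i) (idx i) (s i)) *
              A (fun i => if i ∈ insert j S then (s i).1 else idx i)
            = ∑ t, (∏ i ∈ S, (C i * Up i) (idx i) ((e.symm (b₀, t)) i)) * A (z t) := by
          rw [hsum1]
          rw [Finset.sum_comm]
          refine Finset.sum_congr rfl fun t _ => ?_
          have hstep : ∀ b : {x // x ∈ I j},
              (∏ i ∈ insert j S, (C i * Up i) (idx i) ((e.symm (b, t)) i)) *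
                A (fun i => if i ∈ insert j S then ((e.symm (b, t)) i).1 else idx i)
              = (∏ i ∈ S, (C i * Up i) (idx i) ((e.symm (b₀, t)) i)) *
                  ((C j * Up j) (idx j) b * A (upd j (z t) b.1)) := by
            intro b
            rw [Finset.prod_insert hjS, hsymm_j, hprodc b t, hz2 b t]
            ring
          calc ∑ b : {x // x ∈ I j},
              (∏ i ∈ insert j S, (C i * Up i) (idx i) ((e.symm (b, t)) i)) *
                A (fun i => if i ∈ insert j S then ((e.symm (b, t)) i).1 else idx i)
              = ∑ b : {x // x ∈ I j},
                  (∏ i ∈ S, (C i * Up i) (idx i) ((e.symm (b₀, t)) i)) *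
                    ((C j * Up j) (idx j) b * A (upd j (z t) b.1)) :=
                Finset.sum_congr rfl fun b _ => hstep b
            _ = (∏ i ∈ S, (C i * Up i) (idx i) ((e.symm (b₀, t)) i)) *
                  ∑ b : {x // x ∈ I j}, (C j * Up j) (idx j) b * A (upd j (z t) b.1) := by
                rw [Finset.mul_sum]
            _ = (∏ i ∈ S, (C i * Up i) (idx i) ((e.symm (b₀, t)) i)) * A (z t) := by
                rw [hkey2 t]
        -- right-hand side for `S`
        have hRS : ∑ s : ∀ i, {x // x ∈ I i},
            (∏ i ∈ S, (C i * Up i) (idx i) (s i)) *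
              A (fun i => if i ∈ S then (s i).1 else idx i)
            = ((I j).card : ℝ) *
              ∑ t, (∏ i ∈ S, (C i * Up i) (idx i) ((e.symm (b₀, t)) i)) * A (z t) := by
          rw [hsum1]
          have hfix : ∀ b : {x // x ∈ I j},
              ∑ t, (∏ i ∈ S, (C i * Up i) (idx i) ((e.symm (b, t)) i)) *
                A (fun i => if i ∈ S then ((e.symm (b, t)) i).1 else idx i)
              = ∑ t, (∏ i ∈ S, (C i * Up i) (idx i) ((e.symm (b₀, t)) i)) * A (z t) := by
            intro b
            refine Finset.sum_congr rfl fun t _ => ?_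
            rw [hprodc b t, hz1 b t]
          rw [Finset.sum_congr rfl fun b _ => hfix b, Finset.sum_const, Finset.card_univ,
            Fintype.card_coe, nsmul_eq_mul]
        have hcard0 : ((I j).card : ℝ) ≠ 0 := by
          exact_mod_cast Finset.card_ne_zero_of_mem hx₀
        apply mul_left_cancel₀ hcard0
        rw [hRins, ← hRS, ← ih idx]
        rw [Finset.compl_insert, ← mul_assoc,
          ← Finset.mul_prod_erase Sᶜ _ (Finset.mem_compl.mpr hjS)]
    have hfinal := claim Finset.univ idx₀
    simp only [Finset.compl_univ, Finset.prod_empty, one_mul, Finset.mem_univ, if_true] at hfinal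
    rw [hfinal]
    refine Finset.sum_congr rfl fun s _ => ?_
    rw [hR, mul_comm]
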